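/- Let G₁, G₂, H₁, H₂ be finitely generated groups with G₁ ⊑ H₁ and G₂ ⊑ H₂. Then: (1) G₁ × G₂ ⊑ H₁ × H₂ (direct products); and (2) G₁ ∗ G₂ ⊑ H₁ ∗ H₂ (free products, i.e., coproducts of groups). -/

import Mathlib

open Monoid FreeGroup

namespace PreformsAux

section AltProd
universe u v
variable {A : Type u} {B : Type v} [Group A] [Group B]

/-- Evaluate a symbolic letter into the coproduct. -/
def sEval : A ⊕ B → Monoid.Coprod A B := Sum.elim Coprod.inl Coprod.inr

theorem alt_prod_ne_one (S : List (A ⊕ B)) (hne : S ≠ [])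
    (h1 : ∀ x ∈ S, sEval x ≠ 1)
    (hch : S.Chain' fun x y => x.isLeft ≠ y.isLeft) :
    (S.map sEval).prod ≠ 1 := by
  classical
  set M : Bool → Type (max u v) := fun b => cond b (ULift.{v} A) (ULift.{u} B) with hM
  letI : ∀ b, Group (M b) :=
    fun b => Bool.rec (inferInstance : Group (ULift.{u} B)) (inferInstance : Group (ULift.{v} A)) b
  let eA : A →* M true := (MulEquiv.ulift.symm : A ≃* ULift.{v} A).toMonoidHom
  let eB : B →* M false := (MulEquiv.ulift.symm : B ≃* ULift.{u} B).toMonoidHom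
  let f : Monoid.Coprod A B →* CoprodI M :=
    Coprod.lift ((CoprodI.of (i := true)).comp eA) ((CoprodI.of (i := false)).comp eB)
  let toSig : A ⊕ B → Σ b, M b := Sum.elim (fun a => ⟨true, eA a⟩) (fun b => ⟨false, eB b⟩)
  have hfst : ∀ x : A ⊕ B, (toSig x).fst = x.isLeft := by rintro (a | b) <;> rfl
  have hword : ∀ x : A ⊕ B, f (sEval x) = CoprodI.of (toSig x).snd := by
    rintro (a | b) <;> simp [sEval, f, toSig] <;> rfl
  let W : CoprodI.Word M :=
    { toList := S.map toSig
      ne_one := by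
        intro l hl
        simp only [List.mem_map] at hl
        obtain ⟨x, hx, rfl⟩ := hl
        have hx1 := h1 x hx
        rcases x with a | b
        · intro h
          simp only [toSig, Sum.elim_inl] at h
          have ha : a = 1 := congrArg ULift.down h
          exact hx1 (by simp [sEval, ha])
        · intro h
          simp only [toSig, Sum.elim_inr] at h
          have hb : b = 1 := congrArg ULift.down h
          exact hx1 (by simp [sEval, hb])
      chain_ne := by
        refine List.isChain_map_of_isChain toSig ?_ hch
        intro x y h
        simpa [hfst] using h }
  intro hone
  have hWprod : W.prod = 1 := by
    have : W.prod = f ((S.map sEval).prod) := by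
      rw [map_list_prod, List.map_map]
      simp only [CoprodI.Word.prod, W, List.map_map]
      congr 1
      ext x
      simp [Function.comp, hword]
    rw [this, hone, _root_.map_one]
  have hW : W = CoprodI.Word.empty := by
    letI : ∀ i, DecidableEq (M i) := fun i => Classical.decEq _
    apply (CoprodI.Word.equiv (M := M)).symm.injective
    simpa [CoprodI.Word.equiv, CoprodI.Word.prod_empty] using hWprod
  have : S.map toSig = [] := congrArg CoprodI.Word.toList hW
  exact hne (List.map_eq_nil_iff.mp this)

end AltProd

section Red
variable {k₁ k₂ : ℕ}

/-- symbolic letters -/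
abbrev Lam (k₁ k₂ : ℕ) := FreeGroup (Fin k₁) ⊕ FreeGroup (Fin k₂)

noncomputable def symLen : Lam k₁ k₂ → ℕ := Sum.elim FreeGroup.norm FreeGroup.norm

def combine : Lam k₁ k₂ → Lam k₁ k₂ → Option (Lam k₁ k₂)
  | .inl u, .inl v => some (.inl (u * v))
  | .inr u, .inr v => some (.inr (u * v))
  | _, _ => none

variable (triv : Lam k₁ k₂ → Prop) [DecidablePred triv]

def push (x : Lam k₁ k₂) (S : List (Lam k₁ k₂)) : List (Lam k₁ k₂) :=
  match S with
  | [] => if triv x then [] else [x]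
  | y :: S' =>
    match combine x y with
    | some z => if triv z then S' else z :: S'
    | none => if triv x then y :: S' else x :: y :: S'

/-- evaluation of a symbolic letter -/
def evalL {C D : Type*} [Group C] [Group D] (fA : FreeGroup (Fin k₁) →* C)
    (fB : FreeGroup (Fin k₂) →* D) : Lam k₁ k₂ → Monoid.Coprod C D :=
  Sum.elim (Coprod.inl ∘ fA) (Coprod.inr ∘ fB)

theorem combine_symLen {x y z : Lam k₁ k₂} (h : combine x y = some z) :
    symLen z ≤ symLen x + symLen y := by
  rcases x with u | u <;> rcases y with v | v <;> simp_all [combine, symLen] <;>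
    simpa [← h] using FreeGroup.norm_mul_le (x := u) (y := v)

theorem combine_isLeft {x y z : Lam k₁ k₂} (h : combine x y = some z) :
    z.isLeft = x.isLeft ∧ z.isLeft = y.isLeft := by
  rcases x with u | u <;> rcases y with v | v <;> simp_all [combine] <;> simp [← h]

theorem combine_none_isLeft {x y : Lam k₁ k₂} (h : combine x y = none) :
    x.isLeft ≠ y.isLeft := by
  rcases x with u | u <;> rcases y with v | v <;> simp_all [combine]

theorem combine_eval {C D : Type*} [Group C] [Group D] (fA : FreeGroup (Fin k₁) →* C)
    (fB : FreeGroup (Fin k₂) →* D) {x y z : Lam k₁ k₂} (h : combine x y = some z) :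
    evalL fA fB z = evalL fA fB x * evalL fA fB y := by
  rcases x with u | u <;> rcases y with v | v <;> simp_all [combine, evalL] <;>
    simp [← h, map_mul]

theorem fold_spec {C D E F : Type*} [Group C] [Group D] [Group E] [Group F]
    (fA : FreeGroup (Fin k₁) →* C) (fB : FreeGroup (Fin k₂) →* D)
    (gA : FreeGroup (Fin k₁) →* E) (gB : FreeGroup (Fin k₂) →* F)
    (htriv : ∀ x, triv x ↔ evalL gA gB x = 1)
    (R : ℕ) (agree : ∀ x : Lam k₁ k₂, symLen x ≤ R → (evalL fA fB x = 1 ↔ triv x)) :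
    ∀ L : List (Lam k₁ k₂), (∀ x ∈ L, symLen x ≤ 1) → L.length ≤ R →
      (L.foldr (push triv) []).Chain' (fun x y => x.isLeft ≠ y.isLeft) ∧
      (∀ x ∈ L.foldr (push triv) [], ¬ triv x ∧ evalL fA fB x ≠ 1) ∧
      ((L.foldr (push triv) []).map symLen).sum ≤ L.length ∧
      ((L.foldr (push triv) []).map (evalL gA gB)).prod = (L.map (evalL gA gB)).prod ∧
      ((L.foldr (push triv) []).map (evalL fA fB)).prod = (L.map (evalL fA fB)).prod := by
  intro L
  induction L with
  | nil => simp [List.Chain']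
  | cons x L ih =>
    intro hlen hR
    have hR' : L.length ≤ R := le_trans (by simp) hR
    obtain ⟨ihch, ihne, ihlen, ihg, ihf⟩ := ih (fun y hy => hlen y (List.mem_cons_of_mem _ hy)) hR'
    have hx1 : symLen x ≤ 1 := hlen x List.mem_cons_self
    have hRpos : 1 ≤ R := le_trans (by simp) hR
    have hagx : evalL fA fB x = 1 ↔ triv x := agree x (le_trans hx1 hRpos)
    simp only [List.foldr_cons]
    set S := L.foldr (push triv) [] with hS
    match hSe : S with
    | [] =>
      by_cases htx : triv x
      · have hgx : evalL gA gB x = 1 := (htriv x).mp htx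
        have hfx : evalL fA fB x = 1 := hagx.mpr htx
        refine ⟨by simp [push, htx, List.Chain'], by simp [push, htx], by simp [push, htx], ?_, ?_⟩ <;>
          simp only [push, if_pos htx, List.map_nil, List.map_cons, List.prod_nil,
            List.prod_cons]
        · rw [hgx, one_mul, ← ihg, List.map_nil, List.prod_nil]
        · rw [hfx, one_mul, ← ihf, List.map_nil, List.prod_nil]
      · have hfx : evalL fA fB x ≠ 1 := fun h => htx (hagx.mp h)
        refine ⟨by simp [push, htx, List.Chain'], by simp [push, htx, hfx], ?_, ?_, ?_⟩ <;>
          simp only [push, if_neg htx, List.map_cons, List.map_nil, List.prod_cons,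
            List.prod_nil, List.sum_cons, List.sum_nil, List.length_cons]
        · omega
        · rw [← ihg, List.map_nil, List.prod_nil, mul_one]
        · rw [← ihf, List.map_nil, List.prod_nil, mul_one]
    | y :: S' =>
      have hylen : symLen y ≤ (List.map symLen (y :: S')).sum := by
        simp only [List.map_cons, List.sum_cons]; exact Nat.le_add_right _ _
      have ihg' : evalL gA gB y * (List.map (evalL gA gB) S').prod
          = (List.map (evalL gA gB) L).prod := by simpa using ihg
      have ihf' : evalL fA fB y * (List.map (evalL fA fB) S').prod
          = (List.map (evalL fA fB) L).prod := by simpa using ihf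
      match hc : combine x y with
      | some z =>
        have hzlen : symLen z ≤ 1 + L.length := by
          have h1 := combine_symLen hc
          have h2 : symLen y ≤ L.length := le_trans hylen ihlen
          omega
        have hagz : evalL fA fB z = 1 ↔ triv z := by
          refine agree z (le_trans hzlen ?_)
          simp only [List.length_cons] at hR; omega
        have hgz : evalL gA gB z = evalL gA gB x * evalL gA gB y := combine_eval gA gB hc
        have hfz : evalL fA fB z = evalL fA fB x * evalL fA fB y := combine_eval fA fB hc
        by_cases htz : triv z
        · have hgz1 : evalL gA gB x * evalL gA gB y = 1 := by rw [← hgz]; exact (htriv z).mp htz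
          have hfz1 : evalL fA fB x * evalL fA fB y = 1 := by rw [← hfz]; exact hagz.mpr htz
          refine ⟨?_, ?_, ?_, ?_, ?_⟩ <;> simp only [push, hc, if_pos htz]
          · exact ihch.tail
          · exact fun a ha => ihne a (List.mem_cons_of_mem _ ha)
          · have : (List.map symLen S').sum ≤ (List.map symLen (y :: S')).sum := by
              simp only [List.map_cons, List.sum_cons]; omega
            simp only [List.length_cons]; omega
          · rw [List.map_cons, List.prod_cons, ← ihg', ← mul_assoc, hgz1, one_mul]
          · rw [List.map_cons, List.prod_cons, ← ihf', ← mul_assoc, hfz1, one_mul]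
        · have hfzne : evalL fA fB z ≠ 1 := fun h => htz (hagz.mp h)
          refine ⟨?_, ?_, ?_, ?_, ?_⟩ <;> simp only [push, hc, if_neg htz]
          · rw [List.Chain', List.isChain_cons] at ihch ⊢
            refine ⟨fun w hw h => ihch.1 w hw ((combine_isLeft hc).2.symm.trans h), ihch.2⟩
          · intro a ha
            rcases List.mem_cons.mp ha with h | ha'
            · subst h; exact ⟨htz, hfzne⟩
            · exact ihne a (List.mem_cons_of_mem _ ha')
          · have h1 := combine_symLen hc
            simp only [List.map_cons, List.sum_cons, List.length_cons] at ihlen ⊢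
            omega
          · simp only [List.map_cons, List.prod_cons] at ihg' ⊢
            rw [hgz, mul_assoc, ihg']
          · simp only [List.map_cons, List.prod_cons] at ihf' ⊢
            rw [hfz, mul_assoc, ihf']
      | none =>
        by_cases htx : triv x
        · have hgx : evalL gA gB x = 1 := (htriv x).mp htx
          have hfx : evalL fA fB x = 1 := hagx.mpr htx
          refine ⟨?_, ?_, ?_, ?_, ?_⟩ <;> simp only [push, hc, if_pos htx]
          · exact ihch
          · exact ihne
          · simp only [List.length_cons] at ihlen ⊢; omega
          · simp only [List.map_cons, List.prod_cons, hgx, one_mul]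
            exact ihg'
          · simp only [List.map_cons, List.prod_cons, hfx, one_mul]
            exact ihf'
        · have hfx : evalL fA fB x ≠ 1 := fun h => htx (hagx.mp h)
          refine ⟨?_, ?_, ?_, ?_, ?_⟩ <;> simp only [push, hc, if_neg htx]
          · exact List.isChain_cons_cons.mpr ⟨combine_none_isLeft hc, ihch⟩
          · intro a ha
            rcases List.mem_cons.mp ha with h | ha'
            · subst h; exact ⟨htx, hfx⟩
            · exact ihne a ha'

          · simp only [List.map_cons, List.sum_cons, List.length_cons] at ihlen ⊢
            omega
          · simp only [List.map_cons, List.prod_cons]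
            rw [ihg']
          · simp only [List.map_cons, List.prod_cons]
            rw [ihf']
end Red

end PreformsAux

namespace PreformsAux

theorem norm_lift_le {α β : Type*} [DecidableEq α] [DecidableEq β] (g : α → FreeGroup β)
    (hg : ∀ a, (g a).norm ≤ 1) (w : FreeGroup α) :
    ((FreeGroup.lift g) w).norm ≤ w.norm := by
  have key : ∀ L : List (α × Bool), ((FreeGroup.lift g) (FreeGroup.mk L)).norm ≤ L.length := by
    intro L
    induction L with
    | nil =>
      have : FreeGroup.mk ([] : List (α × Bool)) = 1 := rfl
      simp [this, FreeGroup.norm_one]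
    | cons x L ih =>
      have hmk : FreeGroup.mk (x :: L) = FreeGroup.mk [x] * FreeGroup.mk L := by
        rw [FreeGroup.mul_mk]; rfl
      have h1 : ((FreeGroup.lift g) (FreeGroup.mk [x])).norm ≤ 1 := by
        have : (FreeGroup.lift g) (FreeGroup.mk [x]) = cond x.2 (g x.1) (g x.1)⁻¹ := by
          rw [FreeGroup.lift_mk]; simp
        rw [this]
        rcases x with ⟨a, _ | _⟩
        · simpa [FreeGroup.norm_inv_eq] using hg a
        · exact hg a
      calc ((FreeGroup.lift g) (FreeGroup.mk (x :: L))).norm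
          ≤ ((FreeGroup.lift g) (FreeGroup.mk [x])).norm
            + ((FreeGroup.lift g) (FreeGroup.mk L)).norm := by
            rw [hmk, _root_.map_mul]; exact FreeGroup.norm_mul_le _ _
        _ ≤ 1 + L.length := add_le_add h1 ih
        _ = (x :: L).length := by simp [Nat.add_comm]
  calc ((FreeGroup.lift g) w).norm = ((FreeGroup.lift g) (FreeGroup.mk w.toWord)).norm := by
        rw [FreeGroup.mk_toWord]
    _ ≤ w.toWord.length := key _
    _ = w.norm := rfl

/-- combined generating tuple -/
def comb {k₁ k₂ : ℕ} {A B P : Type*} [Group A] [Group B] [Group P]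
    (φ : A →* P) (ψ : B →* P) (sA : Fin k₁ → A) (sB : Fin k₂ → B) : Fin (k₁ + k₂) → P :=
  fun i => Sum.elim (φ ∘ sA) (ψ ∘ sB) (finSumFinEquiv.symm i)

theorem closure_comb {k₁ k₂ : ℕ} {A B P : Type*} [Group A] [Group B] [Group P]
    (φ : A →* P) (ψ : B →* P) (htop : φ.range ⊔ ψ.range = ⊤)
    (sA : Fin k₁ → A) (sB : Fin k₂ → B)
    (hA : Subgroup.closure (Set.range sA) = ⊤) (hB : Subgroup.closure (Set.range sB) = ⊤) :
    Subgroup.closure (Set.range (comb φ ψ sA sB)) = ⊤ := by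
  rw [eq_top_iff, ← htop, sup_le_iff]
  constructor
  · rw [MonoidHom.range_eq_map, ← hA, MonoidHom.map_closure]
    apply Subgroup.closure_mono
    rintro _ ⟨_, ⟨a, rfl⟩, rfl⟩
    exact ⟨finSumFinEquiv (Sum.inl a), by simp [comb]⟩
  · rw [MonoidHom.range_eq_map, ← hB, MonoidHom.map_closure]
    apply Subgroup.closure_mono
    rintro _ ⟨_, ⟨b, rfl⟩, rfl⟩
    exact ⟨finSumFinEquiv (Sum.inr b), by simp [comb]⟩

/-- symbolic letter corresponding to a letter of a word on `Fin (k₁+k₂)` -/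
def toL {k₁ k₂ : ℕ} (p : Fin (k₁ + k₂) × Bool) : Lam k₁ k₂ :=
  Sum.map (fun a => cond p.2 (FreeGroup.of a) (FreeGroup.of a)⁻¹)
    (fun b => cond p.2 (FreeGroup.of b) (FreeGroup.of b)⁻¹) (finSumFinEquiv.symm p.1)

theorem symLen_toL {k₁ k₂ : ℕ} (p : Fin (k₁ + k₂) × Bool) : symLen (toL p) ≤ 1 := by
  rcases p with ⟨i, b⟩
  rcases h : finSumFinEquiv.symm i with a | c <;> rcases b <;>
    simp [toL, symLen, h, FreeGroup.norm_inv_eq, FreeGroup.norm_of]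

theorem evalL_toL {k₁ k₂ : ℕ} {C D : Type*} [Group C] [Group D]
    (u : Fin k₁ → C) (v : Fin k₂ → D) (p : Fin (k₁ + k₂) × Bool) :
    evalL (FreeGroup.lift u) (FreeGroup.lift v) (toL p)
      = cond p.2 (comb Coprod.inl Coprod.inr u v p.1) (comb Coprod.inl Coprod.inr u v p.1)⁻¹ := by
  rcases p with ⟨i, b⟩
  rcases h : finSumFinEquiv.symm i with a | c <;> rcases b <;>
    simp [toL, evalL, comb, h, FreeGroup.lift_apply_of]

theorem prod_evalL {k₁ k₂ : ℕ} {C D : Type*} [Group C] [Group D]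
    (u : Fin k₁ → C) (v : Fin k₂ → D) (w : FreeGroup (Fin (k₁ + k₂))) :
    ((w.toWord.map toL).map (evalL (FreeGroup.lift u) (FreeGroup.lift v))).prod
      = FreeGroup.lift (comb Coprod.inl Coprod.inr u v) w := by
  conv_rhs => rw [← FreeGroup.mk_toWord (x := w), FreeGroup.lift_mk]
  rw [List.map_map]
  refine congrArg List.prod (List.map_congr_left ?_)
  intro p _
  exact evalL_toL u v p

end PreformsAux

namespace PreformsAux

theorem prod_top (A B : Type*) [Group A] [Group B] :
    (MonoidHom.inl A B).range ⊔ (MonoidHom.inr A B).range = ⊤ := by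
  rw [eq_top_iff]
  rintro ⟨a, b⟩ -
  have h1 : ((a, 1) : A × B) ∈ (MonoidHom.inl A B).range ⊔ (MonoidHom.inr A B).range :=
    Subgroup.mem_sup_left ⟨a, rfl⟩
  have h2 : ((1, b) : A × B) ∈ (MonoidHom.inl A B).range ⊔ (MonoidHom.inr A B).range :=
    Subgroup.mem_sup_right ⟨b, rfl⟩
  simpa using mul_mem h1 h2

/-- delete the second block of generators -/
def rhoA (k₁ k₂ : ℕ) : FreeGroup (Fin (k₁ + k₂)) →* FreeGroup (Fin k₁) :=
  FreeGroup.lift (fun i => Sum.elim FreeGroup.of (fun _ => 1) (finSumFinEquiv.symm i))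

/-- delete the first block of generators -/
def rhoB (k₁ k₂ : ℕ) : FreeGroup (Fin (k₁ + k₂)) →* FreeGroup (Fin k₂) :=
  FreeGroup.lift (fun i => Sum.elim (fun _ => 1) FreeGroup.of (finSumFinEquiv.symm i))

theorem norm_rhoA_le {k₁ k₂ : ℕ} (w : FreeGroup (Fin (k₁ + k₂))) :
    (rhoA k₁ k₂ w).norm ≤ w.norm := by
  refine norm_lift_le _ (fun i => ?_) w
  rcases h : finSumFinEquiv.symm i with a | b <;> simp [h, FreeGroup.norm_of, FreeGroup.norm_one]

theorem norm_rhoB_le {k₁ k₂ : ℕ} (w : FreeGroup (Fin (k₁ + k₂))) :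
    (rhoB k₁ k₂ w).norm ≤ w.norm := by
  refine norm_lift_le _ (fun i => ?_) w
  rcases h : finSumFinEquiv.symm i with a | b <;> simp [h, FreeGroup.norm_of, FreeGroup.norm_one]

theorem fst_lift_comb {k₁ k₂ : ℕ} {C D : Type*} [Group C] [Group D]
    (u : Fin k₁ → C) (v : Fin k₂ → D) (w : FreeGroup (Fin (k₁ + k₂))) :
    (FreeGroup.lift (comb (MonoidHom.inl C D) (MonoidHom.inr C D) u v) w).1
      = FreeGroup.lift u (rhoA k₁ k₂ w) := by
  have : (MonoidHom.fst C D).comp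
        (FreeGroup.lift (comb (MonoidHom.inl C D) (MonoidHom.inr C D) u v))
      = (FreeGroup.lift u).comp (rhoA k₁ k₂) := by
    apply FreeGroup.ext_hom
    intro i
    rcases h : finSumFinEquiv.symm i with a | b <;>
      simp [comb, rhoA, h, FreeGroup.lift_apply_of]
  exact DFunLike.congr_fun this w

theorem snd_lift_comb {k₁ k₂ : ℕ} {C D : Type*} [Group C] [Group D]
    (u : Fin k₁ → C) (v : Fin k₂ → D) (w : FreeGroup (Fin (k₁ + k₂))) :
    (FreeGroup.lift (comb (MonoidHom.inl C D) (MonoidHom.inr C D) u v) w).2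
      = FreeGroup.lift v (rhoB k₁ k₂ w) := by
  have : (MonoidHom.snd C D).comp
        (FreeGroup.lift (comb (MonoidHom.inl C D) (MonoidHom.inr C D) u v))
      = (FreeGroup.lift v).comp (rhoB k₁ k₂) := by
    apply FreeGroup.ext_hom
    intro i
    rcases h : finSumFinEquiv.symm i with a | b <;>
      simp [comb, rhoB, h, FreeGroup.lift_apply_of]
  exact DFunLike.congr_fun this w


theorem evalL_prod_ne_one {k₁ k₂ : ℕ} {C D : Type*} [Group C] [Group D]
    (φ : FreeGroup (Fin k₁) →* C) (ψ : FreeGroup (Fin k₂) →* D)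
    (S : List (Lam k₁ k₂)) (hS : S ≠ [])
    (hno : ∀ x ∈ S, evalL φ ψ x ≠ 1)
    (hch : S.Chain' fun x y => x.isLeft ≠ y.isLeft) :
    (S.map (evalL φ ψ)).prod ≠ 1 := by
  have hmap : S.map (evalL φ ψ) = (S.map (Sum.map φ ψ)).map sEval := by
    rw [List.map_map]
    refine List.map_congr_left ?_
    rintro (u | v) _ <;> rfl
  rw [hmap]
  refine alt_prod_ne_one _ (by simpa using hS) ?_ ?_
  · rintro _ hx
    obtain ⟨y, hy, rfl⟩ := List.mem_map.mp hx
    have := hno y hy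
    rcases y with u | v <;> simpa [sEval, evalL] using this
  · rw [List.Chain', List.isChain_map]
    refine List.IsChain.imp ?_ hch
    intro a b h
    simpa using h

end PreformsAux

/-- `G` preforms `H` (written `G ⊑ H` in the paper). -/
def Preforms (G : Type*) (H : Type*) [Group G] [Group H] : Prop :=
  ∃ (k : ℕ) (t : Fin k → H), Subgroup.closure (Set.range t) = ⊤ ∧
    ∀ R : ℕ, ∃ s : Fin k → G, Subgroup.closure (Set.range s) = ⊤ ∧
      ∀ w : FreeGroup (Fin k), (FreeGroup.toWord w).length ≤ R →
        (FreeGroup.lift s w = 1 ↔ FreeGroup.lift t w = 1)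

/-- Preforming is compatible with direct products and free products. -/
theorem preforms_prod_and_coprod
    (G₁ G₂ H₁ H₂ : Type*) [Group G₁] [Group G₂] [Group H₁] [Group H₂]
    (hG₁ : Group.FG G₁) (hG₂ : Group.FG G₂) (hH₁ : Group.FG H₁) (hH₂ : Group.FG H₂)
    (h₁ : Preforms G₁ H₁) (h₂ : Preforms G₂ H₂) :
    Preforms (G₁ × G₂) (H₁ × H₂) ∧
      Preforms (Monoid.Coprod G₁ G₂) (Monoid.Coprod H₁ H₂) := by
  classical
  open PreformsAux in
  obtain ⟨k₁, tA, htAcl, hstep1⟩ := h₁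
  obtain ⟨k₂, tB, htBcl, hstep2⟩ := h₂
  constructor
  · -- direct products
    refine ⟨k₁ + k₂, comb (MonoidHom.inl H₁ H₂) (MonoidHom.inr H₁ H₂) tA tB,
      closure_comb _ _ (prod_top H₁ H₂) tA tB htAcl htBcl, ?_⟩
    intro R
    obtain ⟨sA, hsAcl, hA⟩ := hstep1 R
    obtain ⟨sB, hsBcl, hB⟩ := hstep2 R
    refine ⟨comb (MonoidHom.inl G₁ G₂) (MonoidHom.inr G₁ G₂) sA sB,
      closure_comb _ _ (prod_top G₁ G₂) sA sB hsAcl hsBcl, ?_⟩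
    intro w hw
    rw [Prod.ext_iff, Prod.ext_iff]
    simp only [Prod.fst_one, Prod.snd_one]
    rw [fst_lift_comb, snd_lift_comb, fst_lift_comb, snd_lift_comb]
    have hwA : (FreeGroup.toWord (rhoA k₁ k₂ w)).length ≤ R :=
      le_trans (norm_rhoA_le w) hw
    have hwB : (FreeGroup.toWord (rhoB k₁ k₂ w)).length ≤ R :=
      le_trans (norm_rhoB_le w) hw
    exact and_congr (hA _ hwA) (hB _ hwB)
  · -- free products
    refine ⟨k₁ + k₂, comb Monoid.Coprod.inl Monoid.Coprod.inr tA tB,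
      closure_comb _ _ Monoid.Coprod.range_inl_sup_range_inr tA tB htAcl htBcl, ?_⟩
    intro R
    obtain ⟨sA, hsAcl, hA⟩ := hstep1 R
    obtain ⟨sB, hsBcl, hB⟩ := hstep2 R
    refine ⟨comb Monoid.Coprod.inl Monoid.Coprod.inr sA sB,
      closure_comb _ _ Monoid.Coprod.range_inl_sup_range_inr sA sB hsAcl hsBcl, ?_⟩
    intro w hw
    set fA := FreeGroup.lift sA with hfA
    set fB := FreeGroup.lift sB with hfB
    set gA := FreeGroup.lift tA with hgA
    set gB := FreeGroup.lift tB with hgB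
    set triv : Lam k₁ k₂ → Prop := fun x => evalL gA gB x = 1 with htrivdef
    have agree : ∀ x : Lam k₁ k₂, symLen x ≤ R → (evalL fA fB x = 1 ↔ triv x) := by
      intro x hx
      rcases x with u | v
      · have e1 : evalL fA fB (Sum.inl u) = 1 ↔ fA u = 1 :=
          Monoid.Coprod.inl_injective.eq_iff' (map_one _)
        have e2 : triv (Sum.inl u) ↔ gA u = 1 :=
          Monoid.Coprod.inl_injective.eq_iff' (map_one _)
        rw [e1, e2]
        exact hA u hx
      · have e1 : evalL fA fB (Sum.inr v) = 1 ↔ fB v = 1 :=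
          Monoid.Coprod.inr_injective.eq_iff' (map_one _)
        have e2 : triv (Sum.inr v) ↔ gB v = 1 :=
          Monoid.Coprod.inr_injective.eq_iff' (map_one _)
        rw [e1, e2]
        exact hB v hx
    set L : List (Lam k₁ k₂) := w.toWord.map toL with hLdef
    have hlet : ∀ x ∈ L, symLen x ≤ 1 := by
      intro x hx
      obtain ⟨p, _, rfl⟩ := List.mem_map.mp hx
      exact symLen_toL p
    have hLR : L.length ≤ R := by simpa [hLdef] using hw
    obtain ⟨hch, hne, -, hgprod, hfprod⟩ :=
      fold_spec triv fA fB gA gB (fun _ => Iff.rfl) R agree L hlet hLR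
    set S := L.foldr (push triv) [] with hSdef
    have hfw : (S.map (evalL fA fB)).prod
        = FreeGroup.lift (comb Monoid.Coprod.inl Monoid.Coprod.inr sA sB) w :=
      hfprod.trans (prod_evalL sA sB w)
    have hgw : (S.map (evalL gA gB)).prod
        = FreeGroup.lift (comb Monoid.Coprod.inl Monoid.Coprod.inr tA tB) w :=
      hgprod.trans (prod_evalL tA tB w)
    rw [← hfw, ← hgw]
    by_cases hS : S = []
    · rw [hS]; simp
    · have h1 : (S.map (evalL fA fB)).prod ≠ 1 :=
        evalL_prod_ne_one fA fB S hS (fun x hx => (hne x hx).2) hch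
      have h2 : (S.map (evalL gA gB)).prod ≠ 1 := by
        refine evalL_prod_ne_one gA gB S hS (fun x hx => ?_) hch
        have := (hne x hx).1
        simpa [htrivdef] using this
      exact ⟨fun h => absurd h h1, fun h => absurd h h2⟩
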